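/- Universal property of the bicrossed product: given a monoid N and monoid homomorphisms u_H : H → N and u_G : G → N such that u_G(g) * u_H(h) = u_H(g ⊗ h) * u_G(g ⊙ h) for all g, h, there exists a unique monoid homomorphism φ : H ⋈ G → N with φ ∘ i_H = u_H and φ ∘ i_G = u_G (namely φ(h, g) = u_H(h) * u_G(g)). -/
import Mathlib


/-- Bicrossed product multiplication on `H × G`. -/
def bmul {G H : Type*} [Monoid G] [Monoid H] (ot : G → H → H) (od : G → H → G)
    (p q : H × G) : H × G := (p.1 * ot p.2 q.1, od p.2 q.1 * q.2)

theorem bicrossed_universal_property {G H N : Type*} [Monoid G] [Monoid H] [Monoid N]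
    (ot : G → H → H) (od : G → H → G)
    (hot_one : ∀ h, ot 1 h = h)
    (hot_mul : ∀ g g' h, ot (g * g') h = ot g (ot g' h))
    (hod_one : ∀ g, od g 1 = g)
    (hod_mul : ∀ g h h', od g (h * h') = od (od g h) h')
    (hot_triv : ∀ g, ot g 1 = 1)
    (hod_triv : ∀ h, od 1 h = 1)
    (bc1 : ∀ g h h', ot g (h * h') = ot g h * ot (od g h) h')
    (bc2 : ∀ g g' h, od (g * g') h = od g (ot g' h) * od g' h)
    (uH : H → N) (uG : G → N)
    (huH_one : uH 1 = 1) (huH_mul : ∀ h h', uH (h * h') = uH h * uH h')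
    (huG_one : uG 1 = 1) (huG_mul : ∀ g g', uG (g * g') = uG g * uG g')
    (hcomm : ∀ (g : G) (h : H), uG g * uH h = uH (ot g h) * uG (od g h)) :
    (∃! φ : H × G → N,
      (φ ((1 : H), (1 : G)) = 1 ∧ ∀ p q, φ (bmul ot od p q) = φ p * φ q) ∧
      (∀ h : H, φ (h, 1) = uH h) ∧ (∀ g : G, φ (1, g) = uG g)) ∧
    -- namely, φ (h, g) = uH h * uG g works
    ((fun p : H × G => uH p.1 * uG p.2) ((1 : H), (1 : G)) = 1 ∧
      (∀ p q, uH (bmul ot od p q).1 * uG (bmul ot od p q).2 =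
        (uH p.1 * uG p.2) * (uH q.1 * uG q.2)) ∧
      (∀ h : H, uH h * uG 1 = uH h) ∧ (∀ g : G, uH 1 * uG g = uG g)) := by
  have hmul : ∀ p q : H × G, uH (bmul ot od p q).1 * uG (bmul ot od p q).2 =
      (uH p.1 * uG p.2) * (uH q.1 * uG q.2) := by
    intro p q
    simp only [bmul, huH_mul, huG_mul]
    rw [show uH p.1 * uH (ot p.2 q.1) * (uG (od p.2 q.1) * uG q.2)
        = uH p.1 * (uH (ot p.2 q.1) * uG (od p.2 q.1)) * uG q.2 by
      simp [mul_assoc], ← hcomm]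
    simp [mul_assoc]
  refine ⟨⟨fun p => uH p.1 * uG p.2, ⟨⟨by simp [huH_one, huG_one], hmul⟩,
    fun h => by simp [huG_one], fun g => by simp [huH_one]⟩, ?_⟩,
    by simp [huH_one, huG_one], hmul,
    fun h => by simp [huG_one], fun g => by simp [huH_one]⟩
  rintro ψ ⟨⟨h1, hm⟩, hH, hG⟩
  funext p
  have : bmul ot od (p.1, (1 : G)) ((1 : H), p.2) = p := by
    simp [bmul, hot_triv, hod_triv]
  calc ψ p = ψ (bmul ot od (p.1, 1) (1, p.2)) := by rw [this]
    _ = uH p.1 * uG p.2 := by rw [hm, hH, hG]
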